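/- Let m, n be finite types and let P : Matrix m m ℂ be idempotent (P * P = P). Then for all G₁ G₂ : Matrix n n ℂ, ctrl P (G₁ * G₂) = (ctrl P G₁) * (ctrl P G₂), i.e., (P ⊗ₖ (G₁ * G₂) + (1 - P) ⊗ₖ 1) = (P ⊗ₖ G₁ + (1 - P) ⊗ₖ 1) * (P ⊗ₖ G₂ + (1 - P) ⊗ₖ 1). Thus controlling is compatible with composition of gates. -/
import Mathlib

open Matrix Kronecker

/-- Controlling by an idempotent `P` is compatible with composition of gates:
`ctrl P (G₁ * G₂) = (ctrl P G₁) * (ctrl P G₂)`. -/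
theorem ctrl_mul {m n : Type*} [Fintype m] [Fintype n] [DecidableEq m] [DecidableEq n]
    (P : Matrix m m ℂ) (hP : P * P = P) (G₁ G₂ : Matrix n n ℂ) :
    P ⊗ₖ (G₁ * G₂) + (1 - P) ⊗ₖ (1 : Matrix n n ℂ) =
      (P ⊗ₖ G₁ + (1 - P) ⊗ₖ (1 : Matrix n n ℂ)) *
        (P ⊗ₖ G₂ + (1 - P) ⊗ₖ (1 : Matrix n n ℂ)) := by
  have h1 : P * (1 - P) = 0 := by
    rw [Matrix.mul_sub, hP, Matrix.mul_one, sub_self]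
  have h2 : (1 - P) * P = 0 := by
    rw [Matrix.sub_mul, hP, Matrix.one_mul, sub_self]
  have h3 : (1 - P) * (1 - P) = 1 - P := by
    rw [Matrix.sub_mul, h1, Matrix.one_mul, sub_zero]
  rw [add_mul, mul_add, mul_add, ← mul_kronecker_mul, ← mul_kronecker_mul,
    ← mul_kronecker_mul, ← mul_kronecker_mul, hP, h1, h2, h3,
    zero_kronecker, zero_kronecker, add_zero, zero_add, one_mul]
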